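/- arXiv:2410.16501 — 8 statements merged into one kernel-verified Lean document; each statement's English description precedes it below -/
import Mathlib

section
/- Let R be a relation with sensitive attribute s, ρ a representation constraint, and T a natural number with T ≤ |R|. If ⌈T · ρ(v)⌉ ≤ count_R(v) for every value v and Σ_v ⌈T · ρ(v)⌉ ≤ T (sum over the support of ρ), then there exists a subset R' ⊆ R with |R'| = T that satisfies ρ. -/
/-- The number of tuples in the relation `R` whose sensitive attribute `s` has value `v`. -/
def countVal {ι V : Type*} [DecidableEq V] (s : ι) (R : Finset (ι → V)) (v : V) : ℕ :=
  (R.filter fun t => t s = v).card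

/-- `R` satisfies the representation constraint `ρ` on the sensitive attribute `s`. -/
def satRC {ι V : Type*} [DecidableEq V] (s : ι) (ρ : V →₀ ℚ) (R : Finset (ι → V)) : Prop :=
  ∀ v : V, ρ v * (R.card : ℚ) ≤ (countVal s R v : ℚ)

/-- If `T ≤ |R|`, `⌈T · ρ(v)⌉ ≤ count_R(v)` for every value `v`, and
`∑_v ⌈T · ρ(v)⌉ ≤ T` (sum over the support of `ρ`), then there exists a subset
`R' ⊆ R` with `|R'| = T` satisfying `ρ`. -/
theorem postclean_sufficiency {ι V : Type*} [DecidableEq V]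
    (s : ι) (R : Finset (ι → V)) (ρ : V →₀ ℚ)
    (h0 : ∀ v, 0 ≤ ρ v) (h1 : ∀ v, ρ v ≤ 1)
    (hsum : ∑ v ∈ ρ.support, ρ v ≤ 1)
    (T : ℕ) (hT : T ≤ R.card)
    (hceil : ∀ v : V, ⌈(T : ℚ) * ρ v⌉ ≤ (countVal s R v : ℤ))
    (hsumceil : ∑ v ∈ ρ.support, ⌈(T : ℚ) * ρ v⌉ ≤ (T : ℤ)) :
    ∃ R' ⊆ R, R'.card = T ∧ satRC s ρ R' := by
  classical
  set n : V → ℕ := fun v => (⌈(T : ℚ) * ρ v⌉).toNat with hn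
  have hcast : ∀ v, (n v : ℤ) = ⌈(T : ℚ) * ρ v⌉ := fun v =>
    Int.toNat_of_nonneg (Int.ceil_nonneg (mul_nonneg (Nat.cast_nonneg T) (h0 v)))
  have hle : ∀ v, n v ≤ countVal s R v := by
    intro v
    have h := hceil v
    rw [← hcast v] at h
    exact_mod_cast h
  -- Choose a subset of size n v for each value v
  have hchoose : ∀ v : V, ∃ S ⊆ R.filter (fun t => t s = v), S.card = n v :=
    fun v => Finset.exists_subset_card_eq (hle v)
  choose f hf hfcard using hchoose
  set S : Finset (ι → V) := ρ.support.biUnion f with hS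
  have hdisj : ∀ v ∈ ρ.support, ∀ w ∈ ρ.support, v ≠ w → Disjoint (f v) (f w) := by
    intro v _ w _ hvw
    refine Finset.disjoint_left.2 fun t htv htw => ?_
    have h1 := (Finset.mem_filter.1 (hf v htv)).2
    have h2 := (Finset.mem_filter.1 (hf w htw)).2
    exact hvw (h1 ▸ h2 ▸ rfl)
  have hScard : S.card = ∑ v ∈ ρ.support, n v := by
    rw [hS, Finset.card_biUnion hdisj]
    exact Finset.sum_congr rfl fun v _ => hfcard v
  have hSsub : S ⊆ R := by
    intro t ht
    obtain ⟨v, _, htv⟩ := Finset.mem_biUnion.1 ht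
    exact (Finset.mem_filter.1 (hf v htv)).1
  have hScardT : S.card ≤ T := by
    have : ((∑ v ∈ ρ.support, n v : ℕ) : ℤ) ≤ (T : ℤ) := by
      push_cast
      rw [show (∑ v ∈ ρ.support, (n v : ℤ)) = ∑ v ∈ ρ.support, ⌈(T : ℚ) * ρ v⌉ from
        Finset.sum_congr rfl fun v _ => hcast v]
      exact hsumceil
    rw [hScard]
    exact_mod_cast this
  obtain ⟨R', hSR', hR'R, hR'card⟩ :=
    Finset.exists_subsuperset_card_eq hSsub hScardT hT
  refine ⟨R', hR'R, hR'card, fun v => ?_⟩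
  have hcount : n v ≤ countVal s R' v := by
    by_cases hv : v ∈ ρ.support
    · have hsub : f v ⊆ R'.filter (fun t => t s = v) := by
        intro t ht
        refine Finset.mem_filter.2 ⟨hSR' (Finset.mem_biUnion.2 ⟨v, hv, ht⟩),
          (Finset.mem_filter.1 (hf v ht)).2⟩
      calc n v = (f v).card := (hfcard v).symm
        _ ≤ _ := Finset.card_le_card hsub
    · have : ρ v = 0 := Finsupp.notMem_support_iff.1 hv
      simp [hn, this]
  have h1 : ρ v * (R'.card : ℚ) ≤ (n v : ℚ) := by
    rw [hR'card]
    have : ((n v : ℤ) : ℚ) = (⌈(T : ℚ) * ρ v⌉ : ℚ) := by exact_mod_cast hcast v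
    push_cast at this
    rw [mul_comm, this]
    exact Int.le_ceil _
  exact h1.trans (by exact_mod_cast hcount)
end

section
/- (Optimality of PostClean.) Let R be a relation with sensitive attribute s and ρ a representation constraint. Then the maximum cardinality of a subset of R satisfying ρ exists (the empty set always satisfies ρ) and equals the greatest T ∈ {0, …, |R|} such that ⌈T · ρ(v)⌉ ≤ count_R(v) for every value v and Σ_v ⌈T · ρ(v)⌉ ≤ T (sum over the support of ρ). -/
/-- The feasibility condition checked by PostClean for a target size `T`. -/
def goodSize {ι V : Type*} [DecidableEq V] (s : ι) (ρ : V →₀ ℚ) (R : Finset (ι → V))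
    (T : ℕ) : Prop :=
  (∀ v : V, ⌈(T : ℚ) * ρ v⌉ ≤ (countVal s R v : ℤ)) ∧
    ∑ v ∈ ρ.support, ⌈(T : ℚ) * ρ v⌉ ≤ (T : ℤ)

open Finset

lemma sum_countVal_le {ι V : Type*} [DecidableEq V] (s : ι) (S : Finset (ι → V))
    (A : Finset V) : ∑ v ∈ A, countVal s S v ≤ S.card := by
  classical
  have hdisj : ∀ v ∈ A, ∀ w ∈ A, v ≠ w →
      Disjoint (S.filter fun t => t s = v) (S.filter fun t => t s = w) := by
    intro v _ w _ hvw
    rw [Finset.disjoint_left]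
    intro t htv htw
    exact hvw ((Finset.mem_filter.1 htv).2 ▸ (Finset.mem_filter.1 htw).2 ▸ rfl)
  have hcb := Finset.card_biUnion hdisj
  unfold countVal
  rw [← hcb]
  exact Finset.card_le_card (Finset.biUnion_subset.2 fun v _ => Finset.filter_subset _ _)

lemma countVal_mono {ι V : Type*} [DecidableEq V] (s : ι) {S R : Finset (ι → V)}
    (h : S ⊆ R) (v : V) : countVal s S v ≤ countVal s R v :=
  Finset.card_le_card (Finset.filter_subset_filter _ h)

/-- A feasible subset witnesses `goodSize` of its cardinality. -/
lemma feasible_goodSize {ι V : Type*} [DecidableEq V] (s : ι) {R R'' : Finset (ι → V)}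
    (ρ : V →₀ ℚ) (hsub : R'' ⊆ R) (hsat : satRC s ρ R'') : goodSize s ρ R R''.card := by
  have key : ∀ v : V, ⌈(R''.card : ℚ) * ρ v⌉ ≤ (countVal s R'' v : ℤ) := by
    intro v
    rw [Int.ceil_le]
    push_cast
    linarith [hsat v]
  constructor
  · intro v
    exact (key v).trans (by exact_mod_cast countVal_mono s hsub v)
  · calc ∑ v ∈ ρ.support, ⌈(R''.card : ℚ) * ρ v⌉
        ≤ ∑ v ∈ ρ.support, (countVal s R'' v : ℤ) := Finset.sum_le_sum fun v _ => key v
      _ ≤ (R''.card : ℤ) := by exact_mod_cast sum_countVal_le s R'' ρ.support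

/-- From a good size one can construct a feasible subset of that cardinality. -/
lemma goodSize_exists_subset {ι V : Type*} [DecidableEq V] (s : ι) (R : Finset (ι → V))
    (ρ : V →₀ ℚ) (h0 : ∀ v, 0 ≤ ρ v) {T : ℕ} (hT : T ≤ R.card) (hg : goodSize s ρ R T) :
    ∃ R' ⊆ R, R'.card = T ∧ satRC s ρ R' := by
  classical
  set m : V → ℕ := fun v => (⌈(T : ℚ) * ρ v⌉).toNat with hm
  have hceil_nonneg : ∀ v, 0 ≤ ⌈(T : ℚ) * ρ v⌉ := fun v =>
    Int.ceil_nonneg (mul_nonneg (by positivity) (h0 v))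
  have hmz : ∀ v, (m v : ℤ) = ⌈(T : ℚ) * ρ v⌉ := fun v =>
    Int.toNat_of_nonneg (hceil_nonneg v)
  have hmle : ∀ v, m v ≤ countVal s R v := by
    intro v
    have h := hg.1 v
    have := hmz v
    omega
  have hchoose : ∀ v, ∃ t ⊆ R.filter fun t => t s = v, t.card = m v := fun v =>
    Finset.exists_subset_card_eq (hmle v)
  choose sub hsub hcard using hchoose
  set S : Finset (ι → V) := ρ.support.biUnion sub with hS
  have hSsub : S ⊆ R := Finset.biUnion_subset.2 fun v _ => (hsub v).trans (Finset.filter_subset _ _)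
  have hScard : S.card = ∑ v ∈ ρ.support, m v := by
    rw [hS, Finset.card_biUnion]
    · exact Finset.sum_congr rfl fun v _ => hcard v
    · intro v _ w _ hvw
      refine Finset.disjoint_left.2 fun t htv htw => hvw ?_
      have h1 := (Finset.mem_filter.1 (hsub v htv)).2
      have h2 := (Finset.mem_filter.1 (hsub w htw)).2
      rw [← h1, ← h2]
  have hSle : S.card ≤ T := by
    have hz : (∑ v ∈ ρ.support, (m v : ℤ)) ≤ (T : ℤ) := by
      calc ∑ v ∈ ρ.support, (m v : ℤ) = ∑ v ∈ ρ.support, ⌈(T : ℚ) * ρ v⌉ :=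
            Finset.sum_congr rfl fun v _ => hmz v
        _ ≤ (T : ℤ) := hg.2
    rw [hScard]
    exact_mod_cast hz
  obtain ⟨P, hPsub, hPcard⟩ := Finset.exists_subset_card_eq (s := R \ S) (n := T - S.card)
    (by rw [Finset.card_sdiff_of_subset hSsub]; omega)
  set R' : Finset (ι → V) := S ∪ P with hR'
  have hdisj : Disjoint S P := Finset.disjoint_left.2 fun t ht htP =>
    (Finset.mem_sdiff.1 (hPsub htP)).2 ht
  have hR'card : R'.card = T := by
    rw [hR', Finset.card_union_of_disjoint hdisj, hPcard]
    omega
  refine ⟨R', Finset.union_subset hSsub (hPsub.trans Finset.sdiff_subset), hR'card, ?_⟩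
  intro v
  by_cases hv : v ∈ ρ.support
  · have hsubR' : sub v ⊆ R'.filter fun t => t s = v := by
      intro t ht
      exact Finset.mem_filter.2 ⟨Finset.mem_union_left _ (Finset.mem_biUnion.2 ⟨v, hv, ht⟩),
        (Finset.mem_filter.1 (hsub v ht)).2⟩
    have hc : m v ≤ countVal s R' v := (hcard v) ▸ Finset.card_le_card hsubR'
    have h2 : (T : ℚ) * ρ v ≤ (⌈(T : ℚ) * ρ v⌉ : ℚ) := Int.le_ceil _
    have h3 : ((m v : ℤ) : ℚ) = (⌈(T : ℚ) * ρ v⌉ : ℚ) := by exact_mod_cast hmz v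
    have h4 : ((m v : ℤ) : ℚ) ≤ (countVal s R' v : ℚ) := by exact_mod_cast hc
    rw [hR'card]
    push_cast at h3 h4 ⊢
    linarith
  · have hz : ρ v = 0 := Finsupp.notMem_support_iff.1 hv
    rw [hz, zero_mul]
    positivity

/-- Optimality of PostClean: there is a maximum-cardinality subset of `R` satisfying `ρ`,
and its cardinality is the greatest `T ∈ {0, …, |R|}` such that `⌈T · ρ(v)⌉ ≤ count_R(v)`
for every value `v` and `∑_v ⌈T · ρ(v)⌉ ≤ T` (sum over the support of `ρ`). -/
theorem postclean_optimal {ι V : Type*} [DecidableEq V]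
    (s : ι) (R : Finset (ι → V)) (ρ : V →₀ ℚ)
    (h0 : ∀ v, 0 ≤ ρ v) (h1 : ∀ v, ρ v ≤ 1)
    (hsum : ∑ v ∈ ρ.support, ρ v ≤ 1) :
    ∃ R' ⊆ R, satRC s ρ R' ∧
      (∀ R'' ⊆ R, satRC s ρ R'' → R''.card ≤ R'.card) ∧
      IsGreatest {T : ℕ | T ≤ R.card ∧ goodSize s ρ R T} R'.card := by
  classical
  set F : Finset ℕ := (Finset.range (R.card + 1)).filter
    (fun T => T ≤ R.card ∧ goodSize s ρ R T) with hF
  have h0F : (0 : ℕ) ∈ F := by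
    refine Finset.mem_filter.2 ⟨Finset.mem_range.2 (by omega), Nat.zero_le _, ?_, ?_⟩
    · intro v
      simp
    · simp
  have hFne : F.Nonempty := ⟨0, h0F⟩
  set T₀ := F.max' hFne with hT₀
  obtain ⟨-, hT₀le, hT₀good⟩ := Finset.mem_filter.1 (F.max'_mem hFne)
  obtain ⟨R', hR'sub, hR'card, hR'sat⟩ := goodSize_exists_subset s R ρ h0 hT₀le hT₀good
  refine ⟨R', hR'sub, hR'sat, ?_, ?_⟩
  · intro R'' hR''sub hR''sat
    have hg := feasible_goodSize s ρ hR''sub hR''sat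
    have hmem : R''.card ∈ F := Finset.mem_filter.2
      ⟨Finset.mem_range.2 (by have := Finset.card_le_card hR''sub; omega),
       Finset.card_le_card hR''sub, hg⟩
    rw [hR'card]
    exact F.le_max' _ hmem
  · constructor
    · exact ⟨hR'card ▸ hT₀le, hR'card ▸ hT₀good⟩
    · intro T hT
      have hmem : T ∈ F := Finset.mem_filter.2 ⟨Finset.mem_range.2 (Nat.lt_succ_of_le hT.1), hT⟩
      rw [hR'card]
      exact F.le_max' _ hmem
end

section
/- (Consensus-FD decomposition.) Let R be a relation and Δ a finite set of FDs containing a consensus FD f = (∅, Y). A nonempty subset R' ⊆ R satisfies Δ if and only if there exists a value y such that R' ⊆ {t ∈ R : t Y = y} and R' satisfies Δ \ {f}. Equivalently, the S-repairs of R w.r.t. Δ are exactly the empty set together with the S-repairs of σ_{Y=y}R := {t ∈ R : t Y = y} w.r.t. Δ \ {f}, for the various values y. -/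
/-- `R` satisfies the functional dependency `f = (X, A)`. -/
def satFD {ι V : Type*} (R : Finset (ι → V)) (f : Finset ι × ι) : Prop :=
  ∀ t₁ ∈ R, ∀ t₂ ∈ R, (∀ a ∈ f.1, t₁ a = t₂ a) → t₁ f.2 = t₂ f.2

/-- `R` satisfies the finite set `Δ` of functional dependencies. -/
def satFDs {ι V : Type*} (Δ : Finset (Finset ι × ι)) (R : Finset (ι → V)) : Prop :=
  ∀ f ∈ Δ, satFD R f

/-- Consensus-FD decomposition.  If `Δ` contains the consensus FD `f = (∅, Y)`, then a
nonempty subset `R' ⊆ R` satisfies `Δ` iff there is a value `y` such that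
`R' ⊆ σ_{Y=y} R` and `R'` satisfies `Δ \ {f}`.  Equivalently, the S-repairs of `R`
w.r.t. `Δ` are exactly the empty set together with the S-repairs of `σ_{Y=y} R`
w.r.t. `Δ \ {f}`, for the various values `y`. -/
theorem consensus_decomposition {ι V : Type*} [DecidableEq ι] [DecidableEq V]
    (R : Finset (ι → V)) (Δ : Finset (Finset ι × ι)) (hleg : ∀ f ∈ Δ, f.2 ∉ f.1)
    (Y : ι) (hf : ((∅ : Finset ι), Y) ∈ Δ) :
    (∀ R' ⊆ R, R'.Nonempty →
      (satFDs Δ R' ↔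
        ∃ y : V, R' ⊆ R.filter (fun t => t Y = y) ∧ satFDs (Δ.erase (∅, Y)) R')) ∧
    (∀ R' : Finset (ι → V),
      (R' ⊆ R ∧ satFDs Δ R') ↔
        (R' = ∅ ∨ ∃ y : V, R' ⊆ R.filter (fun t => t Y = y) ∧
          satFDs (Δ.erase (∅, Y)) R')) := by
  have key : ∀ R' : Finset (ι → V), R' ⊆ R → R'.Nonempty →
      (satFDs Δ R' ↔
        ∃ y : V, R' ⊆ R.filter (fun t => t Y = y) ∧ satFDs (Δ.erase (∅, Y)) R') := by
    intro R' hsub ⟨t₀, ht₀⟩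
    constructor
    · intro hsat
      refine ⟨t₀ Y, ?_, ?_⟩
      · intro t ht
        simp only [Finset.mem_filter]
        exact ⟨hsub ht, hsat _ hf t ht t₀ ht₀ (by simp)⟩
      · intro g hg
        exact hsat g (Finset.mem_of_mem_erase hg)
    · rintro ⟨y, hsubf, hsat⟩
      intro g hg
      by_cases hgf : g = (∅, Y)
      · subst hgf
        intro t₁ h₁ t₂ h₂ _
        have e₁ := (Finset.mem_filter.mp (hsubf h₁)).2
        have e₂ := (Finset.mem_filter.mp (hsubf h₂)).2
        exact e₁.trans e₂.symm
      · exact hsat g (Finset.mem_erase.mpr ⟨hgf, hg⟩)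
  refine ⟨key, fun R' => ?_⟩
  constructor
  · rintro ⟨hsub, hsat⟩
    rcases R'.eq_empty_or_nonempty with h | h
    · exact Or.inl h
    · exact Or.inr ((key R' hsub h).mp hsat)
  · rintro (rfl | ⟨y, hsubf, hsat⟩)
    · exact ⟨Finset.empty_subset _, fun g _ t₁ h₁ => absurd h₁ (by simp)⟩
    · have hsub : R' ⊆ R := hsubf.trans (Finset.filter_subset _ _)
      rcases R'.eq_empty_or_nonempty with rfl | h
      · exact ⟨Finset.empty_subset _, fun g _ t₁ h₁ => absurd h₁ (by simp)⟩
      · exact ⟨hsub, (key R' hsub h).mpr ⟨y, hsubf, hsat⟩⟩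
end

section
/- (Common-LHS decomposition.) Let R be a relation and Δ a finite set of FDs, and suppose the attribute X is a common LHS of Δ, i.e., X ∈ Z for every FD (Z, A) ∈ Δ. Let Δ_{-X} := {(Z \ {X}, A) : (Z, A) ∈ Δ}. Then a subset R' ⊆ R satisfies Δ if and only if for every value x, the subset σ_{X=x}R' := {t ∈ R' : t X = x} satisfies Δ_{-X}. -/
/-- Common-LHS decomposition.  If `X` is a common LHS attribute of `Δ`, then a subset
`R' ⊆ R` satisfies `Δ` iff for every value `x`, the subset `σ_{X=x} R'` satisfies
`Δ₋X := {(Z \ {X}, A) : (Z, A) ∈ Δ}`. -/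
theorem commonLHS_decomposition {ι V : Type*} [DecidableEq ι] [DecidableEq V]
    (R : Finset (ι → V)) (Δ : Finset (Finset ι × ι)) (hleg : ∀ f ∈ Δ, f.2 ∉ f.1)
    (X : ι) (hX : ∀ f ∈ Δ, X ∈ f.1) :
    ∀ R' ⊆ R,
      (satFDs Δ R' ↔
        ∀ x : V, satFDs (Δ.image fun f => (f.1.erase X, f.2))
          (R'.filter fun t => t X = x)) := by
  intro R' _
  constructor
  · intro h x g hg t₁ ht₁ t₂ ht₂ hagree
    simp only [Finset.mem_filter] at ht₁ ht₂
    simp only [Finset.mem_image] at hg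
    obtain ⟨f, hf, rfl⟩ := hg
    refine h f hf t₁ ht₁.1 t₂ ht₂.1 ?_
    intro a ha
    by_cases hax : a = X
    · subst hax; rw [ht₁.2, ht₂.2]
    · exact hagree a (Finset.mem_erase.2 ⟨hax, ha⟩)
  · intro h f hf t₁ ht₁ t₂ ht₂ hagree
    have hXf := hX f hf
    have := h (t₁ X) (f.1.erase X, f.2) (Finset.mem_image.2 ⟨f, hf, rfl⟩)
    refine this t₁ (Finset.mem_filter.2 ⟨ht₁, rfl⟩) t₂
      (Finset.mem_filter.2 ⟨ht₂, (hagree X hXf).symm⟩) ?_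
    intro a ha
    exact hagree a (Finset.mem_of_mem_erase ha)
end

section
/- (Proposition 3.6.) Let Δ be a finite set of FDs. Define a simplification step on finite FD sets as either (a) consensus-FD removal: if (∅, A) ∈ Δ, replace Δ by Δ \ {(∅, A)}, or (b) common-LHS removal: if the attribute A belongs to the left-hand side of every FD in Δ, replace Δ by Δ_{-A} := {(Z \ {A}, B) : (Z, B) ∈ Δ}. Then Δ reduces to the empty set by a finite sequence of simplification steps if and only if Δ is an LHS-chain, i.e., for every two FDs (X₁, Y₁), (X₂, Y₂) ∈ Δ, either X₁ ⊆ X₂ or X₂ ⊆ X₁. -/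
/-- `Δ` is an LHS-chain: the left-hand sides of any two FDs in `Δ` are comparable
under inclusion. -/
def IsLHSChain {ι : Type*} (Δ : Finset (Finset ι × ι)) : Prop :=
  ∀ f₁ ∈ Δ, ∀ f₂ ∈ Δ, f₁.1 ⊆ f₂.1 ∨ f₂.1 ⊆ f₁.1

/-- A single simplification step on finite FD sets: either remove a consensus FD
`(∅, A)`, or remove a common-LHS attribute `A` from the left-hand side of every FD. -/
inductive SimpStep {ι : Type*} [DecidableEq ι] :
    Finset (Finset ι × ι) → Finset (Finset ι × ι) → Prop
  | consensus (Δ : Finset (Finset ι × ι)) (A : ι) (h : ((∅ : Finset ι), A) ∈ Δ) :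
      SimpStep Δ (Δ.erase (∅, A))
  | commonLHS (Δ : Finset (Finset ι × ι)) (A : ι) (h : ∀ f ∈ Δ, A ∈ f.1) :
      SimpStep Δ (Δ.image fun f => (f.1.erase A, f.2))

private lemma step_chain {ι : Type*} [DecidableEq ι] {Δ Δ' : Finset (Finset ι × ι)}
    (h : SimpStep Δ Δ') (hc : IsLHSChain Δ') : IsLHSChain Δ := by
  cases h with
  | consensus A hA =>
      intro f₁ h₁ f₂ h₂
      by_cases e₁ : f₁ = (∅, A)
      · left; simp [e₁]
      by_cases e₂ : f₂ = (∅, A)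
      · right; simp [e₂]
      exact hc f₁ (Finset.mem_erase.2 ⟨e₁, h₁⟩) f₂ (Finset.mem_erase.2 ⟨e₂, h₂⟩)
  | commonLHS A hA =>
      intro f₁ h₁ f₂ h₂
      have h₁' : (f₁.1.erase A, f₁.2) ∈ Δ.image fun f => (f.1.erase A, f.2) :=
        Finset.mem_image_of_mem _ h₁
      have h₂' : (f₂.1.erase A, f₂.2) ∈ Δ.image fun f => (f.1.erase A, f.2) :=
        Finset.mem_image_of_mem _ h₂
      have key : ∀ {X Y : Finset ι}, A ∈ Y → X.erase A ⊆ Y.erase A → X ⊆ Y := by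
        intro X Y hAY hXY x hx
        by_cases hxA : x = A
        · exact hxA ▸ hAY
        · exact Finset.erase_subset _ _ (hXY (Finset.mem_erase.2 ⟨hxA, hx⟩))
      rcases hc _ h₁' _ h₂' with h | h
      · exact Or.inl (key (hA f₂ h₂) h)
      · exact Or.inr (key (hA f₁ h₁) h)

private lemma sum_image_le' {α β : Type*} [DecidableEq α] [DecidableEq β] (s : Finset α) (f : α → β)
    (g : β → ℕ) : ∑ y ∈ s.image f, g y ≤ ∑ x ∈ s, g (f x) := by
  induction s using Finset.induction with
  | empty => simp
  | insert _ _ hnot ih =>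
    rename_i a s
    rw [Finset.image_insert, Finset.sum_insert hnot]
    by_cases h : f a ∈ s.image f
    · rw [Finset.insert_eq_self.2 h]; omega
    · rw [Finset.sum_insert h]; omega

private lemma chain_reduces {ι : Type*} [DecidableEq ι] :
    ∀ n (Δ : Finset (Finset ι × ι)), (∑ f ∈ Δ, (f.1.card + 1)) = n →
      IsLHSChain Δ → Relation.ReflTransGen SimpStep Δ ∅ := by
  intro n
  induction n using Nat.strong_induction_on with
  | _ n ih =>
    intro Δ hn hc
    rcases Finset.eq_empty_or_nonempty Δ with rfl | hne
    · exact Relation.ReflTransGen.refl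
    obtain ⟨f₀, hf₀, hmin⟩ := Δ.exists_min_image (fun f => f.1.card) hne
    have hsub : ∀ g ∈ Δ, f₀.1 ⊆ g.1 := by
      intro g hg
      rcases hc f₀ hf₀ g hg with h | h
      · exact h
      · exact (Finset.eq_of_subset_of_card_le h (hmin g hg)).symm ▸ subset_rfl
    by_cases h0 : f₀.1 = ∅
    · -- consensus step
      have hf₀' : ((∅ : Finset ι), f₀.2) ∈ Δ := by
        have : f₀ = (∅, f₀.2) := by rw [← h0]
        exact this ▸ hf₀
      have hstep := SimpStep.consensus Δ f₀.2 hf₀'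
      have hlt : (∑ f ∈ Δ.erase (∅, f₀.2), (f.1.card + 1)) < n := by
        rw [← hn, ← Finset.sum_erase_add Δ (fun f => f.1.card + 1) hf₀']
        simp
      have hc' : IsLHSChain (Δ.erase (∅, f₀.2)) := fun g₁ h₁ g₂ h₂ =>
        hc g₁ (Finset.mem_of_mem_erase h₁) g₂ (Finset.mem_of_mem_erase h₂)
      exact Relation.ReflTransGen.head hstep (ih _ hlt _ rfl hc')
    · -- common LHS step
      obtain ⟨A, hA⟩ := Finset.nonempty_iff_ne_empty.2 h0
      have hcom : ∀ g ∈ Δ, A ∈ g.1 := fun g hg => hsub g hg hA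
      have hstep := SimpStep.commonLHS Δ A hcom
      set Δ' := Δ.image fun f => (f.1.erase A, f.2) with hΔ'
      have hle : (∑ f ∈ Δ', (f.1.card + 1)) ≤ ∑ f ∈ Δ, ((f.1.erase A).card + 1) :=
        sum_image_le' Δ _ _
      have hlt : (∑ f ∈ Δ', (f.1.card + 1)) < n := by
        rw [← hn]
        refine lt_of_le_of_lt hle ?_
        refine Finset.sum_lt_sum_of_nonempty hne ?_
        intro g hg
        have := Finset.card_erase_of_mem (hcom g hg)
        have hpos : 1 ≤ g.1.card := Finset.card_pos.2 ⟨A, hcom g hg⟩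
        omega
      have hc' : IsLHSChain Δ' := by
        intro g₁ h₁ g₂ h₂
        obtain ⟨p₁, hp₁, rfl⟩ := Finset.mem_image.1 h₁
        obtain ⟨p₂, hp₂, rfl⟩ := Finset.mem_image.1 h₂
        rcases hc p₁ hp₁ p₂ hp₂ with h | h
        · exact Or.inl (Finset.erase_subset_erase A h)
        · exact Or.inr (Finset.erase_subset_erase A h)
      exact Relation.ReflTransGen.head hstep (ih _ hlt _ rfl hc')

/-- Proposition 3.6: a finite set `Δ` of FDs reduces to the empty set by a finite
sequence of consensus-FD and common-LHS simplification steps if and only if `Δ` is an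
LHS-chain. -/
theorem reduces_to_empty_iff_lhs_chain {ι : Type*} [DecidableEq ι]
    (Δ : Finset (Finset ι × ι)) (hleg : ∀ f ∈ Δ, f.2 ∉ f.1) :
    Relation.ReflTransGen SimpStep Δ ∅ ↔ IsLHSChain Δ := by
  constructor
  · clear hleg
    intro h
    induction h using Relation.ReflTransGen.head_induction_on with
    | refl => intro f hf; simp at hf
    | head hstep _ ih => exact step_chain hstep ih
  · exact chain_reduces _ Δ rfl
end

section
/- (Correctness of the 3-SAT reduction underlying Theorem 3.1.) Let n, m ≥ 1 and let C : Fin m → Fin 3 → (Fin n × Bool) encode a 3-CNF formula φ with clauses c_j (j ∈ Fin m), where the literal (v, b) means variable v with polarity b. Let R ⊆ (Fin n) × Bool × (Fin m) be the finite set R := {(v, b, j) : ∃ i ∈ Fin 3, C j i = (v, b)}. Then the following are equivalent: (1) φ is satisfiable, i.e., there exists σ : Fin n → Bool such that for every j ∈ Fin m there is i ∈ Fin 3 with σ (C j i).1 = (C j i).2; (2) there exists R' ⊆ R with |R'| ≥ m such that (a) for all t₁, t₂ ∈ R', t₁.1 = t₂.1 implies t₁.2.1 = t₂.2.1 (the FD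 A → B holds), and (b) for every j ∈ Fin m, |R'| ≤ m · |{t ∈ R' : t.2.2 = j}| (each clause value has frequency at least 1/m in R'). -/
/-- Correctness of the 3-SAT reduction underlying Theorem 3.1.  The 3-CNF formula
encoded by `C` (clause `j` consists of the three literals `C j 0, C j 1, C j 2`, where a
literal `(v, b)` means variable `v` with polarity `b`) is satisfiable if and only if the
relation `R := {(v, b, j) : literal (v, b) occurs in clause j}` has a subset `R'` of size
at least `m` that satisfies the FD `A → B` and in which every clause value has frequency
at least `1/m`. -/
theorem threeSat_reduction_correct (n m : ℕ) (hn : 1 ≤ n) (hm : 1 ≤ m)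
    (C : Fin m → Fin 3 → Fin n × Bool) :
    (∃ σ : Fin n → Bool, ∀ j : Fin m, ∃ i : Fin 3, σ (C j i).1 = (C j i).2) ↔
    (∃ R' ⊆ (Finset.univ.filter
        (fun t : Fin n × Bool × Fin m => ∃ i : Fin 3, C t.2.2 i = (t.1, t.2.1))),
      m ≤ R'.card ∧
      (∀ t₁ ∈ R', ∀ t₂ ∈ R', t₁.1 = t₂.1 → t₁.2.1 = t₂.2.1) ∧
      (∀ j : Fin m, R'.card ≤ m * (R'.filter fun t => t.2.2 = j).card)) := by
  constructor
  · rintro ⟨σ, hσ⟩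
    choose i hi using hσ
    set f : Fin m → Fin n × Bool × Fin m :=
      fun j => ((C j (i j)).1, (C j (i j)).2, j) with hf
    have hinj : Function.Injective f := by
      intro a b hab
      exact congrArg (fun t => t.2.2) hab
    refine ⟨Finset.image f Finset.univ, ?_, ?_, ?_, ?_⟩
    · intro t ht
      simp only [Finset.mem_image] at ht
      obtain ⟨j, _, rfl⟩ := ht
      simp only [Finset.mem_filter, Finset.mem_univ, true_and]
      exact ⟨i j, rfl⟩
    · rw [Finset.card_image_of_injective _ hinj, Finset.card_univ, Fintype.card_fin]
    · intro t₁ ht₁ t₂ ht₂ h12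
      simp only [Finset.mem_image] at ht₁ ht₂
      obtain ⟨j₁, _, rfl⟩ := ht₁
      obtain ⟨j₂, _, rfl⟩ := ht₂
      simp only [hf] at h12 ⊢
      rw [← hi j₁, ← hi j₂, h12]
    · intro j
      have hcard : (Finset.image f Finset.univ).card = m := by
        rw [Finset.card_image_of_injective _ hinj, Finset.card_univ, Fintype.card_fin]
      rw [hcard]
      have hmem : f j ∈ (Finset.image f Finset.univ).filter (fun t => t.2.2 = j) := by
        simp only [Finset.mem_filter, Finset.mem_image]
        exact ⟨⟨j, Finset.mem_univ j, rfl⟩, by simp [hf]⟩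
      have : 1 ≤ ((Finset.image f Finset.univ).filter (fun t => t.2.2 = j)).card :=
        Finset.card_pos.mpr ⟨f j, hmem⟩
      calc m = m * 1 := (mul_one m).symm
        _ ≤ _ := Nat.mul_le_mul_left m this
  · rintro ⟨R', hsub, hcard, hFD, hfreq⟩
    refine ⟨fun v => decide (∃ t ∈ R', t.1 = v ∧ t.2.1 = true), ?_⟩
    intro j
    have hpos : 0 < (R'.filter fun t => t.2.2 = j).card := by
      by_contra h
      push_neg at h
      have h0 : (R'.filter fun t => t.2.2 = j).card = 0 := Nat.le_zero.mp h
      have := hfreq j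
      rw [h0, Nat.mul_zero] at this
      omega
    obtain ⟨t, ht⟩ := Finset.card_pos.mp hpos
    simp only [Finset.mem_filter] at ht
    obtain ⟨htR', htj⟩ := ht
    have htR := hsub htR'
    simp only [Finset.mem_filter, Finset.mem_univ, true_and] at htR
    obtain ⟨i, hi⟩ := htR
    rw [htj] at hi
    refine ⟨i, ?_⟩
    rw [hi]
    simp only []
    by_cases hb : t.2.1 = true
    · rw [hb]
      simp only [decide_eq_true_eq]
      exact ⟨t, htR', rfl, hb⟩
    · have hb' : t.2.1 = false := by simpa using hb
      rw [hb']
      simp only [decide_eq_false_iff_not]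
      rintro ⟨t', ht', h1, h2⟩
      have := hFD t' ht' t htR' h1
      rw [h2, hb'] at this
      exact absurd this (by simp)
end

section
/- (Correctness of the reduction from exact colored matching, Lemma C.1.) Let U, V be types, E a finite set of pairs in U × V (a bipartite edge set), k ≥ 1, c : U × V → Fin k an edge coloring, φ : Fin k → ℕ a color constraint, and T := Σ_{i} φ(i). Let R := {(u, v, c (u, v)) : (u, v) ∈ E} ⊆ U × V × Fin k. Then the following are equivalent: (1) there exists a matching M ⊆ E (i.e., for all e₁, e₂ ∈ M, e₁.1 = e₂.1 → e₁ = e₂ and e₁.2 = e₂.2 → e₁ = e₂) with exactly φ(i) edges of color i for every i ∈ Fin k; (2) there exists R' ⊆ R with |R'| ≥ T such that for all t₁, t₂ ∈ R': t₁.1 = t₂.1 → t₁.2.1 = t₂.2.1, t₁.2.1 = t₂.2.1 → t₁.1 = t₂.1, and t₁.1 = t₂.1 → t₁.2.2 = t₂.2.2 (the FDs A → B, B → A, A → C), and for every i ∈ Fin k, T · |{t ∈ R' : t.2.2 = i}| ≥ φ(i) · |R'| (the representation constraint %c_i ≥ φ(i)/T). -/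
/-- Correctness of the reduction from exact colored matching (Lemma C.1).  Given a
bipartite edge set `E ⊆ U × V`, an edge coloring `c` with `k` colors, and a color
constraint `φ` with `T := ∑ i, φ i`, the graph has a matching with exactly `φ i` edges
of each color `i` if and only if the relation `R := {(u, v, c(u, v)) : (u, v) ∈ E}` has
a subset `R'` of size at least `T` satisfying the FDs `A → B`, `B → A`, `A → C` and the
representation constraint `%cᵢ ≥ φ(i)/T` for every color `i`. -/
theorem exact_colored_matching_reduction {U V : Type*} [DecidableEq U] [DecidableEq V]
    (E : Finset (U × V)) (k : ℕ) (hk : 1 ≤ k)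
    (c : U × V → Fin k) (φ : Fin k → ℕ) :
    (∃ M ⊆ E,
        (∀ e₁ ∈ M, ∀ e₂ ∈ M, (e₁.1 = e₂.1 → e₁ = e₂) ∧ (e₁.2 = e₂.2 → e₁ = e₂)) ∧
        (∀ i : Fin k, (M.filter fun e => c e = i).card = φ i)) ↔
    (∃ R' ⊆ E.image (fun e => (e.1, e.2, c e)),
        (∑ i, φ i) ≤ R'.card ∧
        (∀ t₁ ∈ R', ∀ t₂ ∈ R',
          (t₁.1 = t₂.1 → t₁.2.1 = t₂.2.1) ∧ (t₁.2.1 = t₂.2.1 → t₁.1 = t₂.1) ∧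
          (t₁.1 = t₂.1 → t₁.2.2 = t₂.2.2)) ∧
        (∀ i : Fin k,
          φ i * R'.card ≤ (∑ j, φ j) * (R'.filter fun t => t.2.2 = i).card)) := by
  constructor
  · rintro ⟨M, hME, hmatch, hcount⟩
    have hinj : Set.InjOn (fun e : U × V => (e.1, e.2, c e)) M := by
      intro a _ b _ h
      simp only [Prod.mk.injEq] at h
      exact Prod.ext h.1 h.2.1
    have hMcard : M.card = ∑ i, φ i := by
      rw [Finset.card_eq_sum_card_fiberwise (f := c) (t := Finset.univ)
        (fun x _ => Finset.mem_univ (c x))]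
      simp [hcount]
    have hfilter : ∀ i : Fin k,
        ((M.image (fun e => (e.1, e.2, c e))).filter fun t => t.2.2 = i).card = φ i := by
      intro i
      rw [Finset.filter_image, Finset.card_image_of_injOn
        (hinj.mono (Finset.filter_subset _ _))]
      exact hcount i
    refine ⟨M.image (fun e => (e.1, e.2, c e)), Finset.image_subset_image hME, ?_, ?_, ?_⟩
    · rw [Finset.card_image_of_injOn hinj, hMcard]
    · rintro t₁ ht₁ t₂ ht₂
      obtain ⟨e₁, he₁, rfl⟩ := Finset.mem_image.1 ht₁
      obtain ⟨e₂, he₂, rfl⟩ := Finset.mem_image.1 ht₂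
      obtain ⟨h1, h2⟩ := hmatch e₁ he₁ e₂ he₂
      refine ⟨fun h => by rw [h1 h], fun h => by rw [h2 h], fun h => by rw [h1 h]⟩
    · intro i
      rw [Finset.card_image_of_injOn hinj, hMcard, hfilter i, mul_comm]
  · rintro ⟨R', hR'sub, hcard, hFD, hrep⟩
    have hkey : ∀ t ∈ R', (t.1, t.2.1) ∈ E ∧ c (t.1, t.2.1) = t.2.2 := by
      intro t ht
      obtain ⟨e, he, rfl⟩ := Finset.mem_image.1 (hR'sub ht)
      exact ⟨he, rfl⟩
    have hφle : ∀ i : Fin k, φ i ≤ (R'.filter fun t => t.2.2 = i).card := by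
      intro i
      rcases Nat.eq_zero_or_pos (∑ j, φ j) with hT | hT
      · have := Finset.sum_eq_zero_iff.1 hT i (Finset.mem_univ i)
        simp [this]
      · have h1 : φ i * (∑ j, φ j) ≤ φ i * R'.card := Nat.mul_le_mul_left _ hcard
        have h2 := hrep i
        have := le_trans h1 h2
        rw [mul_comm (φ i)] at this
        exact Nat.le_of_mul_le_mul_left this hT
    choose S hSsub hScard using fun i => Finset.exists_subset_card_eq (hφle i)
    set R'' : Finset (U × V × Fin k) := Finset.univ.biUnion S with hR''
    have hR''sub : R'' ⊆ R' := by
      intro t ht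
      obtain ⟨i, _, hti⟩ := Finset.mem_biUnion.1 ht
      exact (Finset.filter_subset _ _) (hSsub i hti)
    have hfinj : Set.InjOn (fun t : U × V × Fin k => (t.1, t.2.1)) R'' := by
      intro a ha b hb h
      simp only [Prod.mk.injEq] at h
      have hc : a.2.2 = b.2.2 := by
        rw [← (hkey a (hR''sub ha)).2, ← (hkey b (hR''sub hb)).2, h.1, h.2]
      exact Prod.ext h.1 (Prod.ext h.2 hc)
    have hfib : ∀ i : Fin k, (R''.filter fun t => t.2.2 = i) = S i := by
      intro i
      ext t
      simp only [Finset.mem_filter, hR'', Finset.mem_biUnion, Finset.mem_univ, true_and]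
      constructor
      · rintro ⟨⟨j, htj⟩, hti⟩
        have := (Finset.mem_filter.1 (hSsub j htj)).2
        rw [hti] at this
        rwa [this]
      · intro ht
        exact ⟨⟨i, ht⟩, (Finset.mem_filter.1 (hSsub i ht)).2⟩
    refine ⟨R''.image (fun t => (t.1, t.2.1)), ?_, ?_, ?_⟩
    · intro e he
      obtain ⟨t, ht, rfl⟩ := Finset.mem_image.1 he
      exact (hkey t (hR''sub ht)).1
    · rintro e₁ he₁ e₂ he₂
      obtain ⟨t₁, ht₁, rfl⟩ := Finset.mem_image.1 he₁
      obtain ⟨t₂, ht₂, rfl⟩ := Finset.mem_image.1 he₂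
      obtain ⟨f1, f2, _⟩ := hFD t₁ (hR''sub ht₁) t₂ (hR''sub ht₂)
      exact ⟨fun h => Prod.ext h (f1 h), fun h => Prod.ext (f2 h) h⟩
    · intro i
      have : ((R''.image fun t => (t.1, t.2.1)).filter fun e => c e = i)
          = (R''.filter fun t => t.2.2 = i).image (fun t => (t.1, t.2.1)) := by
        rw [Finset.filter_image]
        congr 1
        apply Finset.filter_congr
        intro t ht
        rw [(hkey t (hR''sub ht)).2]
      rw [this, Finset.card_image_of_injOn (hfinj.mono (Finset.filter_subset _ _)),
        hfib i, hScard i]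
end

section
/- (Lemma B.1.) Let R be a relation with sensitive attribute s, let D ⊆ V be the set of distinct sensitive values occurring in R, and let k := |D| with k ≥ 2 and |R| ≥ 2. If F is a family of subsets of R such that no two distinct members of F are representatively equivalent (i.e., for distinct R₁, R₂ ∈ F there is a value v with count_{R₁}(v) ≠ count_{R₂}(v)), then |F| ≤ ∏_{v ∈ D} (count_R(v) + 1), and moreover ∏_{v ∈ D} (count_R(v) + 1) ≤ ((|R| + k)/k)^k. -/
open Real Finset

lemma amgm {ι : Type*} (D : Finset ι) (hD : D.Nonempty) (f : ι → ℝ)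
    (hf : ∀ i ∈ D, 0 ≤ f i) :
    ∏ i ∈ D, f i ≤ ((∑ i ∈ D, f i) / D.card) ^ D.card := by
  have hkpos : 0 < (D.card : ℝ) := by exact_mod_cast Finset.card_pos.mpr hD
  have h := Real.geom_mean_le_arith_mean_weighted D (fun _ => (D.card : ℝ)⁻¹) f
    (fun i _ => by positivity)
    (by simp [Finset.sum_const, mul_inv_cancel₀ hkpos.ne'])
    hf
  have h2 : (∏ i ∈ D, f i ^ ((D.card : ℝ)⁻¹)) ^ (D.card : ℝ)
      ≤ ((∑ i ∈ D, f i) / D.card) ^ (D.card : ℝ) := by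
    apply Real.rpow_le_rpow (Finset.prod_nonneg fun i hi => Real.rpow_nonneg (hf i hi) _)
      _ hkpos.le
    calc ∏ i ∈ D, f i ^ ((D.card : ℝ)⁻¹) ≤ ∑ i ∈ D, (D.card : ℝ)⁻¹ * f i := h
    _ = (∑ i ∈ D, f i) / D.card := by rw [← Finset.mul_sum]; ring
  have h3 : (∏ i ∈ D, f i ^ ((D.card : ℝ)⁻¹)) ^ (D.card : ℝ) = ∏ i ∈ D, f i := by
    rw [← Real.finset_prod_rpow D _ (fun i hi => Real.rpow_nonneg (hf i hi) _)]
    refine Finset.prod_congr rfl fun i hi => ?_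
    rw [← Real.rpow_mul (hf i hi), inv_mul_cancel₀ hkpos.ne', Real.rpow_one]
  rw [h3] at h2
  calc ∏ i ∈ D, f i ≤ ((∑ i ∈ D, f i) / D.card) ^ (D.card : ℝ) := h2
  _ = _ := by rw [Real.rpow_natCast]

lemma countVal_eq_zero {ι V : Type*} [DecidableEq V] (s : ι) {R S : Finset (ι → V)}
    (hS : S ⊆ R) {v : V} (hv : v ∉ R.image fun t => t s) : countVal s S v = 0 := by
  rw [countVal, Finset.card_eq_zero, Finset.filter_eq_empty_iff]
  intro t ht hts
  exact hv (Finset.mem_image.mpr ⟨t, hS ht, hts⟩)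

/-- Lemma B.1: if `D = R.image (· s)` is the set of distinct sensitive values occurring
in `R`, `k = |D| ≥ 2`, `|R| ≥ 2`, and `F` is a family of subsets of `R` no two distinct
members of which are representatively equivalent, then
`|F| ≤ ∏_{v ∈ D} (count_R(v) + 1)`, and moreover
`∏_{v ∈ D} (count_R(v) + 1) ≤ ((|R| + k)/k)^k`. -/
theorem candidate_family_size_bound {ι V : Type*} [DecidableEq V]
    (s : ι) (R : Finset (ι → V))
    (hR : 2 ≤ R.card) (hk : 2 ≤ (R.image fun t => t s).card)
    (F : Finset (Finset (ι → V)))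
    (hF : ∀ S ∈ F, S ⊆ R)
    (hdist : ∀ S₁ ∈ F, ∀ S₂ ∈ F, S₁ ≠ S₂ → ∃ v : V, countVal s S₁ v ≠ countVal s S₂ v) :
    F.card ≤ ∏ v ∈ R.image (fun t => t s), (countVal s R v + 1) ∧
      ((∏ v ∈ R.image (fun t => t s), (countVal s R v + 1) : ℕ) : ℚ) ≤
        (((R.card : ℚ) + ((R.image fun t => t s).card : ℚ)) /
            ((R.image fun t => t s).card : ℚ)) ^ (R.image fun t => t s).card := by
  classical
  set D := R.image (fun t => t s) with hD
  constructor
  · -- injection into the pi set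
    have hcard := Finset.card_le_card_of_injOn
      (f := fun S => fun v (_ : v ∈ D) => countVal s S v)
      (t := D.pi fun v => Finset.range (countVal s R v + 1))
      (fun S hS => Finset.mem_pi.mpr fun v _ => Finset.mem_range.mpr
        (Nat.lt_succ_of_le (Finset.card_le_card
          (Finset.filter_subset_filter _ (hF S hS)))))
      (by
        intro S₁ hS₁ S₂ hS₂ heq
        by_contra hne
        obtain ⟨v, hv⟩ := hdist S₁ (by simpa using hS₁) S₂ (by simpa using hS₂) hne
        by_cases hvD : v ∈ D
        · exact hv (congrFun (congrFun heq v) hvD)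
        · exact hv ((countVal_eq_zero s (hF S₁ (by simpa using hS₁)) hvD).trans
            (countVal_eq_zero s (hF S₂ (by simpa using hS₂)) hvD).symm))
    simpa [Finset.card_pi] using hcard
  · -- AM-GM part
    have hDne : D.Nonempty := Finset.card_pos.mp (by omega)
    have hsum : ∑ v ∈ D, ((countVal s R v : ℝ) + 1) = (R.card : ℝ) + (D.card : ℝ) := by
      have : R.card = ∑ v ∈ D, countVal s R v :=
        Finset.card_eq_sum_card_image (fun t => t s) R
      rw [Finset.sum_add_distrib, Finset.sum_const, nsmul_eq_mul, mul_one]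
      push_cast [this]
      ring
    have ham := amgm D hDne (fun v => (countVal s R v : ℝ) + 1) (fun i _ => by positivity)
    rw [hsum] at ham
    rw [← Rat.cast_le (K := ℝ)]
    push_cast
    convert ham using 2
end
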